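/- Any non-increasing sequence of Hilbert–Samuel functions H₁ ≥ H₂ ≥ H₃ ≥ ⋯ , where each H_j is of the form H_j(l) = #{α ∈ ℕⁿ : α ∉ N_j, |α| ≤ l} for subsets N_j ⊆ ℕⁿ with N_j + ℕⁿ = N_j (n fixed), stabilizes: there exists J such that H_j = H_J for all j ≥ J. -/

import Mathlib

namespace HS17

/-- downward closed -/
def DC {n : ℕ} (C : Set (Fin n →₀ ℕ)) : Prop := ∀ a ∈ C, ∀ b : Fin n →₀ ℕ, b ≤ a → b ∈ C

lemma cons_mono {n : ℕ} {y y' : ℕ} {s s' : Fin n →₀ ℕ} (hy : y ≤ y') (hs : s ≤ s') :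
    Finsupp.cons y s ≤ Finsupp.cons y' s' := by
  rw [Finsupp.le_def]
  intro i
  refine Fin.cases ?_ ?_ i
  · simpa using hy
  · intro j
    simpa using Finsupp.le_def.1 hs j

def slc {n : ℕ} (C : Set (Fin (n+1) →₀ ℕ)) (k : ℕ) : Set (Fin n →₀ ℕ) :=
  {s | Finsupp.cons k s ∈ C}

lemma DC_slc {n} {C : Set (Fin (n+1) →₀ ℕ)} (hC : DC C) (k : ℕ) : DC (slc C k) :=
  fun a ha b hb => hC _ ha _ (cons_mono le_rfl hb)

lemma slc_anti {n} {C : Set (Fin (n+1) →₀ ℕ)} (hC : DC C) {k k' : ℕ} (h : k ≤ k') :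
    slc C k' ⊆ slc C k :=
  fun s hs => hC _ hs _ (cons_mono h le_rfl)

lemma subset_of_slc {n} {C C' : Set (Fin (n+1) →₀ ℕ)}
    (h : ∀ k, slc C k ⊆ slc C' k) : C ⊆ C' := by
  intro x hx
  have hx' : Finsupp.tail x ∈ slc C (x 0) := by
    show Finsupp.cons (x 0) (Finsupp.tail x) ∈ C
    rw [Finsupp.cons_tail]; exact hx
  have := h (x 0) hx'
  have h2 : Finsupp.cons (x 0) (Finsupp.tail x) ∈ C' := this
  rwa [Finsupp.cons_tail] at h2

lemma chain_stab {n : ℕ} (A : ℕ → Set (Fin n →₀ ℕ))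
    (hup : ∀ k, ∀ a ∈ A k, ∀ b, a ≤ b → b ∈ A k)
    (hmono : Monotone A) : ∃ K, ∀ k, K ≤ k → A k = A K := by
  by_contra hcon
  push_neg at hcon
  have step : ∀ K : ℕ, ∃ k, K < k ∧ ∃ x, x ∈ A k ∧ x ∉ A K := by
    intro K
    obtain ⟨k, hk, hne⟩ := hcon K
    have hsub : A K ⊆ A k := hmono hk
    have hns : ¬ A k ⊆ A K := fun h => hne (Set.Subset.antisymm h hsub)
    obtain ⟨x, hx1, hx2⟩ := Set.not_subset.1 hns
    refine ⟨k, ?_, x, hx1, hx2⟩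
    rcases hk.lt_or_eq with h | rfl
    · exact h
    · exact absurd rfl hne
  choose g hg hx using step
  choose w hw1 hw2 using hx
  set f : ℕ → ℕ := fun m => g^[m] 0 with hfdef
  have hfs : ∀ m, f (m+1) = g (f m) := fun m => Function.iterate_succ_apply' g m 0
  have hfmono : StrictMono f := strictMono_nat_of_lt_succ (fun m => by rw [hfs]; exact hg (f m))
  obtain ⟨m, m', hmm, hle⟩ := (Set.isPWO_of_wellQuasiOrderedLE (Set.univ : Set (Fin n →₀ ℕ))).exists_lt (f := fun m => w (f m)) (fun m => Set.mem_univ _)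
  have h1 : w (f m) ∈ A (f (m+1)) := by rw [hfs]; exact hw1 (f m)
  have h2 : A (f (m+1)) ⊆ A (f m') := hmono (hfmono.monotone hmm)
  have h3 : w (f m') ∈ A (f m') := hup _ _ (h2 h1) _ hle
  exact hw2 (f m') h3

lemma slc_stab {n} {C : Set (Fin (n+1) →₀ ℕ)} (hC : DC C) :
    ∃ K, ∀ k, K ≤ k → slc C k = slc C K := by
  have hup : ∀ k, ∀ a ∈ (slc C k)ᶜ, ∀ b, a ≤ b → b ∈ (slc C k)ᶜ := by
    intro k a ha b hab hb
    exact ha (DC_slc hC k _ hb _ hab)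
  have hm : Monotone (fun k => (slc C k)ᶜ) := by
    intro k k' hkk'
    exact Set.compl_subset_compl.2 (slc_anti hC hkk')
  obtain ⟨K, hK⟩ := chain_stab _ hup hm
  refine ⟨K, fun k hk => ?_⟩
  simpa only [compl_inj_iff] using hK k hk

lemma sublistForall₂_get {α : Type*} {r : α → α → Prop} {l₁ l₂ : List α}
    (h : List.SublistForall₂ r l₁ l₂) :
    ∀ i (h1 : i < l₁.length), ∃ j, ∃ h2 : j < l₂.length, i ≤ j ∧
      r (l₁.get ⟨i, h1⟩) (l₂.get ⟨j, h2⟩) := by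
  induction h with
  | nil => intro i hi; simp at hi
  | cons hr h ih =>
      intro i hi
      cases i with
      | zero => exact ⟨0, by simp, le_rfl, hr⟩
      | succ i =>
          obtain ⟨j, hj, hij, hrr⟩ := ih i (by simpa using hi)
          exact ⟨j+1, by simpa using hj, by omega, hrr⟩
  | cons_right h ih =>
      intro i hi
      obtain ⟨j, hj, hij, hrr⟩ := ih i hi
      exact ⟨j+1, by simpa using hj, by omega, hrr⟩

lemma subset_of_words {n} {C C' : Set (Fin (n+1) →₀ ℕ)} (hC : DC C) (hC' : DC C')
    {K K' : ℕ} (hK : ∀ k, K ≤ k → slc C k = slc C K) (hK' : ∀ k, K' ≤ k → slc C' k = slc C' K')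
    (hw : List.SublistForall₂ (· ≤ ·) ((List.range K).map (slc C)) ((List.range K').map (slc C')))
    (ht : slc C K ≤ slc C' K') : C ⊆ C' := by
  apply subset_of_slc
  intro k
  rcases lt_or_ge k K with hk | hk
  · obtain ⟨j, hj, hkj, hr⟩ := sublistForall₂_get hw k (by simpa using hk)
    have hj' : j < K' := by simpa using hj
    have hr' : slc C k ⊆ slc C' j := by
      simpa using hr
    exact subset_trans hr' (slc_anti hC' hkj)
  · rw [hK k hk]
    refine subset_trans ht ?_
    rcases le_or_gt K' k with h | h
    · rw [hK' k h]
    · exact slc_anti hC' h.le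

theorem DCisPWO : ∀ n : ℕ, {C : Set (Fin n →₀ ℕ) | DC C}.IsPWO
  | 0 => by
      haveI : Subsingleton (Fin 0 →₀ ℕ) := ⟨fun a b => Finsupp.ext (fun i => Fin.elim0 i)⟩
      haveI : Finite (Fin 0 →₀ ℕ) := Finite.of_subsingleton
      exact (Set.toFinite _).isPWO
  | (n+1) => by
      have IH := DCisPWO n
      refine Set.partiallyWellOrderedOn_iff_exists_lt.2 ?_
      intro f hf
      have hDC : ∀ m, DC (f m) := hf
      choose K hK using fun m => slc_stab (hDC m)
      set D : Set (Set (Fin n →₀ ℕ)) := {C | DC C} with hD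
      have higman := Set.PartiallyWellOrderedOn.partiallyWellOrderedOn_sublistForall₂
        (α := Set (Fin n →₀ ℕ)) (· ≤ ·) IH
      haveI : IsPreorder (List (Set (Fin n →₀ ℕ))) (List.SublistForall₂ (α := Set (Fin n →₀ ℕ)) (· ≤ ·)) :=
        { refl := (List.SublistForall₂.is_refl).refl, trans := (List.SublistForall₂.is_trans).trans }
      have hprod := higman.prod IH
      set g : ℕ → List (Set (Fin n →₀ ℕ)) × Set (Fin n →₀ ℕ) :=
        fun m => ((List.range (K m)).map (slc (f m)), slc (f m) (K m)) with hg
      have hmem : ∀ m, g m ∈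
          ({ l : List (Set (Fin n →₀ ℕ)) | ∀ x, x ∈ l → x ∈ D } ×ˢ D) := by
        intro m
        constructor
        · intro x hx
          simp only [hg, List.mem_map, List.mem_range] at hx
          obtain ⟨k, _, rfl⟩ := hx
          exact DC_slc (hDC m) k
        · exact DC_slc (hDC m) (K m)
      obtain ⟨m, m', hmm, hle⟩ := hprod.exists_lt hmem
      exact ⟨m, m', hmm, subset_of_words (hDC m) (hDC m') (hK m) (hK m') hle.1 hle.2⟩

lemma deg_le {n} (α : Fin n →₀ ℕ) (i : Fin n) : α i ≤ α.sum (fun _ c => c) := by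
  by_cases h : i ∈ α.support
  · exact Finset.single_le_sum (f := fun j => α j) (fun _ _ => Nat.zero_le _) h
  · simp [Finsupp.notMem_support_iff.1 h]

lemma finite_ball (n l : ℕ) : {α : Fin n →₀ ℕ | (α.sum fun _ c => c) ≤ l}.Finite := by
  apply Set.Finite.subset (Set.finite_Iic (Finsupp.equivFunOnFinite.symm (fun _ => l)))
  intro α hα
  rw [Set.mem_Iic, Finsupp.le_def]
  intro i
  have := le_trans (deg_le α i) hα
  simpa using this

lemma count_mono {n} {C C' : Set (Fin n →₀ ℕ)} (h : C ⊆ C') (l : ℕ) :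
    Set.ncard {α | α ∈ C ∧ (α.sum fun _ c => c) ≤ l} ≤
      Set.ncard {α | α ∈ C' ∧ (α.sum fun _ c => c) ≤ l} :=
  Set.ncard_le_ncard (fun α hα => ⟨h hα.1, hα.2⟩)
    ((finite_ball n l).subset (fun α hα => hα.2))

end HS17

/-- Any non-increasing sequence of Hilbert–Samuel functions
`H_j(l) = #{α ∈ ℕⁿ : α ∉ N_j, |α| ≤ l}`, where `N_j ⊆ ℕⁿ` satisfies `N_j + ℕⁿ = N_j`,
stabilizes. -/
theorem hilbertSamuel_sequence_stabilizes (n : ℕ) (N : ℕ → Set (Fin n →₀ ℕ))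
    (hstab : ∀ j, {x | ∃ a ∈ N j, ∃ b : Fin n →₀ ℕ, x = a + b} = N j)
    (H : ℕ → ℕ → ℕ)
    (hH : ∀ j l, H j l = Set.ncard {α : Fin n →₀ ℕ | α ∉ N j ∧ (α.sum fun _ c => c) ≤ l})
    (hmono : ∀ j l, H (j + 1) l ≤ H j l) :
    ∃ J : ℕ, ∀ j, J ≤ j → ∀ l, H j l = H J l := by
  classical
  set C : ℕ → Set (Fin n →₀ ℕ) := fun j => (N j)ᶜ with hCdef
  have hDC : ∀ j, HS17.DC (C j) := by
    intro j a ha b hb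
    intro hbN
    apply ha
    rw [← hstab j]
    obtain ⟨c, rfl⟩ := le_iff_exists_add.1 hb
    exact ⟨b, hbN, c, rfl⟩
  have hanti0 : ∀ j d l, H (j + d) l ≤ H j l := by
    intro j d
    induction d with
    | zero => intro l; exact le_rfl
    | succ d ih =>
        intro l
        exact le_trans (hmono (j + d) l) (ih l)
  have hanti : ∀ j j', j ≤ j' → ∀ l, H j' l ≤ H j l := by
    intro j j' h l
    have he : j' = j + (j' - j) := by omega
    rw [he]
    exact hanti0 j (j' - j) l
  by_contra hcon
  push_neg at hcon
  have step : ∀ J : ℕ, ∃ j, J < j ∧ ∃ l, H j l < H J l := by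
    intro J
    obtain ⟨j, hj, l, hne⟩ := hcon J
    refine ⟨j, ?_, l, lt_of_le_of_ne (hanti J j hj l) hne⟩
    rcases hj.lt_or_eq with h | rfl
    · exact h
    · exact absurd rfl hne
  choose g hg hlt using step
  set f : ℕ → ℕ := fun m => g^[m] 0 with hfdef
  have hfs : ∀ m, f (m+1) = g (f m) := fun m => Function.iterate_succ_apply' g m 0
  have hfmono : StrictMono f := strictMono_nat_of_lt_succ (fun m => by rw [hfs]; exact hg (f m))
  obtain ⟨m, m', hmm, hle⟩ := (HS17.DCisPWO n).exists_lt (f := fun m => C (f m)) (fun m => hDC (f m))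
  obtain ⟨l, hstrict⟩ := hlt (f m)
  rw [← hfs m] at hstrict
  have h1 : H (f m') l ≤ H (f (m+1)) l := hanti _ _ (hfmono.monotone hmm) l
  have h2 : H (f m) l ≤ H (f m') l := by
    rw [hH, hH]
    exact HS17.count_mono hle l
  omega
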